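/- Let G be a digraph, m ≥ 0 an integer, and let a, i₀,…,i_{m+1}, j₀,…,j_m, b be vertices (not necessarily pairwise distinct) satisfying, for all k = 0,…,m: a → i_k, i_k → j_k, j_k → b, and i_{k+1} → j_k; and in addition a → i_{m+1}, (i₀ → b or i₀ = b), and (i_{m+1} → b or i_{m+1} = b). Then ω := Σ_{k=0}^{m} (e_{a i_k j_k b} − e_{a i_{k+1} j_k b}) belongs to Ω₃(G); moreover there exists a digraph map f : T_{m+2} → G with f_*(τ_{m+2}) = ω. -/

import Mathlib

open scoped BigOperators
open Classical

/-- A digraph: an irreflexive relation on a vertex type. -/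
structure Dgraph (V : Type*) where
  Adj : V → V → Prop
  loopless : ∀ v : V, ¬ Adj v v

/-- An elementary `p`-path on the vertex type `V`: a sequence of `p+1` vertices. -/
abbrev EPath (V : Type*) (p : ℕ) := Fin (p + 1) → V

/-- A path is regular if consecutive vertices are distinct. -/
def IsRegularPath {V : Type*} {p : ℕ} (f : EPath V p) : Prop :=
  ∀ k : Fin p, f k.castSucc ≠ f k.succ

/-- A path is allowed if consecutive vertices are joined by an arrow. -/
def IsAllowedPath {V : Type*} (G : Dgraph V) {p : ℕ} (f : EPath V p) : Prop :=
  ∀ k : Fin p, G.Adj (f k.castSucc) (f k.succ)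

/-- The projection of `Λ_p` onto its regular part; this realizes `R_p = Λ_p / I_p`
as the subspace of `Λ_p` spanned by the regular elementary paths. -/
noncomputable def regProj (K : Type*) [Field K] (V : Type*) (p : ℕ) :
    (EPath V p →₀ K) →ₗ[K] (EPath V p →₀ K) :=
  Finsupp.linearCombination K
    (fun f : EPath V p => if IsRegularPath f then Finsupp.single f (1 : K) else 0)

/-- The (non-reduced) boundary operator on `Λ`. -/
noncomputable def bdryFull (K : Type*) [Field K] (V : Type*) (p : ℕ) :
    (EPath V (p + 1) →₀ K) →ₗ[K] (EPath V p →₀ K) :=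
  Finsupp.linearCombination K
    (fun f : EPath V (p + 1) =>
      ∑ q : Fin (p + 2), ((-1 : K) ^ (q : ℕ)) • Finsupp.single (f ∘ q.succAbove) (1 : K))

/-- The boundary operator `∂` on the regular part (i.e. on `R`). -/
noncomputable def bdry (K : Type*) [Field K] (V : Type*) (p : ℕ) :
    (EPath V (p + 1) →₀ K) →ₗ[K] (EPath V p →₀ K) :=
  (regProj K V p).comp (bdryFull K V p)

/-- The span of the regular elementary paths: the realization of `R_p` inside `Λ_p`. -/
noncomputable def regularMod (K : Type*) [Field K] (V : Type*) (p : ℕ) :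
    Submodule K (EPath V p →₀ K) :=
  Submodule.span K {x | ∃ f : EPath V p, IsRegularPath f ∧ x = Finsupp.single f (1 : K)}

/-- `A_p(G)`: the span of the allowed elementary paths. -/
noncomputable def allowedMod (K : Type*) [Field K] (V : Type*) (G : Dgraph V) (p : ℕ) :
    Submodule K (EPath V p →₀ K) :=
  Submodule.span K {x | ∃ f : EPath V p, IsAllowedPath G f ∧ x = Finsupp.single f (1 : K)}

/-- `Ω_p(G)`: the space of ∂-invariant `p`-paths. -/
noncomputable def Omega (K : Type*) [Field K] (V : Type*) (G : Dgraph V) :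
    (p : ℕ) → Submodule K (EPath V p →₀ K)
  | 0 => allowedMod K V G 0
  | (p + 1) => allowedMod K V G (p + 1) ⊓ (allowedMod K V G p).comap (bdry K V p)

/-- An `(a,b)`-cluster: every elementary path occurring with nonzero coefficient
starts at `a` and ends at `b`. -/
def IsCluster {K : Type*} [Field K] {V : Type*} {p : ℕ} (a b : V) (ω : EPath V p →₀ K) : Prop :=
  ∀ f ∈ ω.support, f 0 = a ∧ f (Fin.last p) = b

/-- A minimal ∂-invariant path: a nonzero element of `Ω_p` such that no nonzero
∂-invariant path is supported on a proper (nonempty) subset of its support. -/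
def IsMinimal (K : Type*) [Field K] {V : Type*} (G : Dgraph V) (p : ℕ)
    (ω : EPath V p →₀ K) : Prop :=
  ω ∈ Omega K V G p ∧ ω ≠ 0 ∧
    ∀ ω' : EPath V p →₀ K, ω' ∈ Omega K V G p → ω' ≠ 0 → ¬ (ω'.support ⊂ ω.support)

/-- A digraph map: every arrow goes to an arrow or collapses to a vertex. -/
structure DgraphMap {V W : Type*} (X : Dgraph V) (Y : Dgraph W) where
  toFun : V → W
  map_adj : ∀ ⦃u v : V⦄, X.Adj u v → Y.Adj (toFun u) (toFun v) ∨ toFun u = toFun v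

/-- The induced map `f_* : R_n(X) → R_n(Y)` (in the regular-part realization):
push forward elementary paths and kill the irregular ones. -/
noncomputable def inducedMap (K : Type*) [Field K] {V W : Type*} (φ : V → W) (p : ℕ) :
    (EPath V p →₀ K) →ₗ[K] (EPath W p →₀ K) :=
  (regProj K W p).comp (Finsupp.lmapDomain K K (fun f : EPath V p => φ ∘ f))

/-- Cyclic successor on `Fin m`. -/
def finRot {m : ℕ} (k : Fin m) : Fin m := ⟨((k : ℕ) + 1) % m, Nat.mod_lt _ k.pos⟩

/-- The vertices of the trapezohedron `T_m`. -/
inductive TVert (m : ℕ) : Type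
  | a : TVert m
  | b : TVert m
  | vi : Fin m → TVert m
  | vj : Fin m → TVert m

/-- The adjacency relation of the trapezohedron `T_m`:
`a → i_k`, `i_k → j_k`, `i_{k+1} → j_k`, `j_k → b` (indices mod `m`). -/
def TrapAdj (m : ℕ) : TVert m → TVert m → Prop
  | TVert.a, TVert.vi _ => True
  | TVert.vi k, TVert.vj l => k = l ∨ k = finRot l
  | TVert.vj _, TVert.b => True
  | _, _ => False

/-- The trapezohedron digraph `T_m`. -/
def Trap (m : ℕ) : Dgraph (TVert m) where
  Adj := TrapAdj m
  loopless := by intro v h; cases v <;> exact h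

/-- The trapezohedral path `τ_m`. -/
noncomputable def tau (K : Type*) [Field K] (m : ℕ) : EPath (TVert m) 3 →₀ K :=
  ∑ k : Fin m,
    (Finsupp.single ![TVert.a, TVert.vi k, TVert.vj k, TVert.b] (1 : K)
      - Finsupp.single ![TVert.a, TVert.vi (finRot k), TVert.vj k, TVert.b] (1 : K))

/-- The submodule of `(a,b)`-clusters. -/
def clusterMod (K : Type*) [Field K] (V : Type*) (p : ℕ) (a b : V) :
    Submodule K (EPath V p →₀ K) where
  carrier := {ω | ∀ f ∈ ω.support, f 0 = a ∧ f (Fin.last p) = b}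
  add_mem' := by
    intro x y hx hy f hf
    rcases Finset.mem_union.mp (Finsupp.support_add hf) with h | h
    exacts [hx f h, hy f h]
  zero_mem' := by intro f hf; simp at hf
  smul_mem' := by
    intro c x hx f hf
    exact hx f (Finsupp.support_smul hf)

/-- `Ω₃^{(a,b)}(G)`: the ∂-invariant `(a,b)`-clusters. -/
noncomputable def OmegaAB (K : Type*) [Field K] (V : Type*) (G : Dgraph V) (a b : V) :
    Submodule K (EPath V 3 →₀ K) :=
  Omega K V G 3 ⊓ clusterMod K V 3 a b

/-- Out-neighbourhood. -/
def Nplus {V : Type*} (G : Dgraph V) (v : V) : Set V := {w | G.Adj v w}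

/-- In-neighbourhood. -/
def Nminus {V : Type*} (G : Dgraph V) (v : V) : Set V := {w | G.Adj w v}

/-- `E(X,Y)`: the edges of `G` starting in `X` and ending in `Y`. -/
def Ebetween {V : Type*} (G : Dgraph V) (X Y : Set V) : Set (V × V) :=
  {p | p.1 ∈ X ∧ p.2 ∈ Y ∧ G.Adj p.1 p.2}

/-- `A = N⁺(a) \ {b}`. -/
def setA {V : Type*} (G : Dgraph V) (a b : V) : Set V := Nplus G a \ {b}

/-- `B = N⁻(b) \ {a}`. -/
def setB {V : Type*} (G : Dgraph V) (a b : V) : Set V := Nminus G b \ {a}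

/-- The vertex set of `H = Ind(A \ B, B \ A)`. -/
def Hverts {V : Type*} (G : Dgraph V) (a b : V) : Set V :=
  (setA G a b \ setB G a b) ∪ (setB G a b \ setA G a b)

/-- `H = Ind(A \ B, B \ A)` regarded as an undirected (simple) graph on its vertex set. -/
def Hgraph {V : Type*} (G : Dgraph V) (a b : V) : SimpleGraph (Hverts G a b) where
  Adj u v :=
    ((u : V) ∈ setA G a b \ setB G a b ∧ (v : V) ∈ setB G a b \ setA G a b ∧ G.Adj u v)
      ∨ ((v : V) ∈ setA G a b \ setB G a b ∧ (u : V) ∈ setB G a b \ setA G a b ∧ G.Adj v u)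
  symm := ⟨by intro u v h; exact h.symm⟩
  loopless := ⟨by
    intro u h
    rcases h with ⟨_, _, h3⟩ | ⟨_, _, h3⟩ <;> exact G.loopless _ h3⟩

/-- The set of vertices of `G` belonging to the connected component `c` of `H`. -/
def compVerts {V : Type*} (G : Dgraph V) (a b : V)
    (c : (Hgraph G a b).ConnectedComponent) : Set V :=
  {v | ∃ h : v ∈ Hverts G a b, (Hgraph G a b).connectedComponentMk ⟨v, h⟩ = c}

/-- The set `S_k` associated to a connected component of `H`. -/
def Sset {V : Type*} (G : Dgraph V) (a b : V)
    (c : (Hgraph G a b).ConnectedComponent) : Set (V × V) :=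
  Ebetween G (compVerts G a b c ∩ (setA G a b \ setB G a b))
      ((Nplus G a ∪ {a}) ∩ Nminus G b)
    ∪ Ebetween G (Nplus G a ∩ (Nminus G b ∪ {b}))
      (compVerts G a b c ∩ (setB G a b \ setA G a b))

section Aux

lemma myComp0 {V : Type*} (w0 w1 w2 w3 : V) :
    (![w0,w1,w2,w3] ∘ (0 : Fin 4).succAbove) = ![w1,w2,w3] := by
  funext k; fin_cases k <;> rfl
lemma myComp1 {V : Type*} (w0 w1 w2 w3 : V) :
    (![w0,w1,w2,w3] ∘ (1 : Fin 4).succAbove) = ![w0,w2,w3] := by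
  funext k; fin_cases k <;> rfl
lemma myComp2 {V : Type*} (w0 w1 w2 w3 : V) :
    (![w0,w1,w2,w3] ∘ (2 : Fin 4).succAbove) = ![w0,w1,w3] := by
  funext k; fin_cases k <;> rfl
lemma myComp3 {V : Type*} (w0 w1 w2 w3 : V) :
    (![w0,w1,w2,w3] ∘ (3 : Fin 4).succAbove) = ![w0,w1,w2] := by
  funext k; fin_cases k <;> rfl

lemma myCompMap {V W : Type*} (φ : V → W) (w0 w1 w2 w3 : V) :
    (φ ∘ ![w0,w1,w2,w3]) = ![φ w0, φ w1, φ w2, φ w3] := by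
  funext k; fin_cases k <;> rfl

lemma regProj_single' (K : Type*) [Field K] {V : Type*} {p : ℕ} (f : EPath V p) :
    regProj K V p (Finsupp.single f (1:K))
      = if IsRegularPath f then Finsupp.single f 1 else 0 := by
  simp [regProj, Finsupp.linearCombination_single]

lemma bdryFull_single3 (K : Type*) [Field K] {V : Type*} (w0 w1 w2 w3 : V) :
    bdryFull K V 2 (Finsupp.single ![w0,w1,w2,w3] (1:K))
      = Finsupp.single ![w1,w2,w3] 1 - Finsupp.single ![w0,w2,w3] 1
        + Finsupp.single ![w0,w1,w3] 1 - Finsupp.single ![w0,w1,w2] 1 := by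
  rw [bdryFull, Finsupp.linearCombination_single, one_smul, Fin.sum_univ_four,
    myComp0, myComp1, myComp2, myComp3]
  have e0 : ((0:Fin 4):ℕ) = 0 := rfl
  have e1 : ((1:Fin 4):ℕ) = 1 := rfl
  have e2 : ((2:Fin 4):ℕ) = 2 := rfl
  have e3 : ((3:Fin 4):ℕ) = 3 := rfl
  rw [e0, e1, e2, e3]
  simp only [pow_zero, pow_one, pow_succ, one_mul, neg_one_mul, neg_neg, one_smul, neg_one_smul,
    neg_mul]
  abel

lemma myTelescope {M : Type*} [AddCommGroup M] {n : ℕ} (g : Fin (n+1) → M) :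
    ∑ k : Fin n, (g k.castSucc - g k.succ) = g 0 - g (Fin.last n) := by
  induction n with
  | zero => simp
  | succ n ih =>
      rw [Fin.sum_univ_castSucc]
      have := ih (g ∘ Fin.castSucc)
      simp only [Function.comp_apply] at this
      have h2 : ∀ k : Fin n, g k.castSucc.castSucc - g k.castSucc.succ
          = g k.castSucc.castSucc - g k.succ.castSucc := by
        intro k; rw [Fin.succ_castSucc]
      rw [Finset.sum_congr rfl (fun k _ => h2 k), this]
      simp only [Fin.succ_last, Fin.castSucc_zero]
      abel

lemma my_adj_ne {V : Type*} (G : Dgraph V) {x y : V} (h : G.Adj x y) : x ≠ y :=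
  fun e => G.loopless y (e ▸ h)

lemma my_reg_of_allowed {V : Type*} (G : Dgraph V) {p : ℕ} {f : EPath V p}
    (hf : IsAllowedPath G f) : IsRegularPath f :=
  fun k => my_adj_ne G (hf k)

lemma allowed_single_mem (K : Type*) [Field K] {V : Type*} (G : Dgraph V) {p : ℕ}
    {f : EPath V p} (hf : IsAllowedPath G f) :
    Finsupp.single f (1:K) ∈ allowedMod K V G p :=
  Submodule.subset_span ⟨f, hf, rfl⟩

lemma regProj_allowed (K : Type*) [Field K] {V : Type*} (G : Dgraph V) {p : ℕ}
    {f : EPath V p} (hf : IsAllowedPath G f) :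
    regProj K V p (Finsupp.single f (1:K)) = Finsupp.single f 1 := by
  rw [regProj_single', if_pos (my_reg_of_allowed G hf)]

lemma regProj_allowed_mem (K : Type*) [Field K] {V : Type*} (G : Dgraph V) {p : ℕ}
    {f : EPath V p} (hf : IsAllowedPath G f) :
    regProj K V p (Finsupp.single f (1:K)) ∈ allowedMod K V G p := by
  rw [regProj_allowed K G hf]; exact allowed_single_mem K G hf

lemma allowed3 {V : Type*} (G : Dgraph V) {w0 w1 w2 w3 : V}
    (h01 : G.Adj w0 w1) (h12 : G.Adj w1 w2) (h23 : G.Adj w2 w3) :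
    IsAllowedPath G ![w0,w1,w2,w3] := by
  intro k; fin_cases k <;> simpa

lemma allowed2 {V : Type*} (G : Dgraph V) {w0 w1 w2 : V}
    (h01 : G.Adj w0 w1) (h12 : G.Adj w1 w2) :
    IsAllowedPath G ![w0,w1,w2] := by
  intro k; fin_cases k <;> simpa

lemma irreg23 {V : Type*} (w0 w1 w2 : V) : ¬ IsRegularPath ![w0,w1,w2,w2] :=
  fun h => h 2 rfl

lemma irreg12 {V : Type*} (w0 w1 : V) : ¬ IsRegularPath ![w0,w1,w1] :=
  fun h => h 1 rfl

end Aux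

def trapMap {V : Type*} (m : ℕ) (a b : V) (iv : Fin (m+2) → V) (jv : Fin (m+1) → V) :
    TVert (m+2) → V
  | TVert.a => a
  | TVert.b => b
  | TVert.vi k => iv k
  | TVert.vj k => if h : (k:ℕ) < m+1 then jv ⟨k, h⟩ else b

theorem statement7 (K : Type*) [Field K] {V : Type*} (G : Dgraph V) (m : ℕ)
    (a b : V) (iv : Fin (m + 2) → V) (jv : Fin (m + 1) → V)
    (hai : ∀ k : Fin (m + 1), G.Adj a (iv k.castSucc))
    (hij : ∀ k : Fin (m + 1), G.Adj (iv k.castSucc) (jv k))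
    (hjb : ∀ k : Fin (m + 1), G.Adj (jv k) b)
    (hij' : ∀ k : Fin (m + 1), G.Adj (iv k.succ) (jv k))
    (hai' : G.Adj a (iv (Fin.last (m + 1))))
    (hi0 : G.Adj (iv 0) b ∨ iv 0 = b)
    (him : G.Adj (iv (Fin.last (m + 1))) b ∨ iv (Fin.last (m + 1)) = b) :
    (∑ k : Fin (m + 1), (Finsupp.single ![a, iv k.castSucc, jv k, b] (1 : K)
        - Finsupp.single ![a, iv k.succ, jv k, b] (1 : K))) ∈ Omega K V G 3 ∧
    ∃ f : DgraphMap (Trap (m + 2)) G,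
      inducedMap K f.toFun 3 (tau K (m + 2))
        = ∑ k : Fin (m + 1), (Finsupp.single ![a, iv k.castSucc, jv k, b] (1 : K)
            - Finsupp.single ![a, iv k.succ, jv k, b] (1 : K)) := by
  have haiAll : ∀ k : Fin (m+2), G.Adj a (iv k) := by
    intro k
    by_cases h : (k:ℕ) < m+1
    · have h1 := hai ⟨(k:ℕ), h⟩
      have hk : (⟨(k:ℕ), h⟩ : Fin (m+1)).castSucc = k := by ext; simp
      rwa [hk] at h1
    · have hk : k = Fin.last (m+1) := by
        ext; have := k.isLt; simp only [Fin.val_last]; omega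
      rw [hk]; exact hai'
  have hA1 : ∀ k : Fin (m+1), IsAllowedPath G ![a, iv k.castSucc, jv k, b] :=
    fun k => allowed3 G (hai k) (hij k) (hjb k)
  have hA2 : ∀ k : Fin (m+1), IsAllowedPath G ![a, iv k.succ, jv k, b] :=
    fun k => allowed3 G (haiAll k.succ) (hij' k) (hjb k)
  have htel : (∑ k : Fin (m+1), (Finsupp.single ![a, iv k.castSucc, b] (1:K)
        - Finsupp.single ![a, iv k.succ, b] (1:K)))
      = Finsupp.single ![a, iv 0, b] (1:K)
        - Finsupp.single ![a, iv (Fin.last (m+1)), b] (1:K) :=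
    myTelescope (fun t => Finsupp.single ![a, iv t, b] (1:K))
  have hterm : ∀ k : Fin (m+1),
      bdryFull K V 2 (Finsupp.single ![a, iv k.castSucc, jv k, b] (1:K)
          - Finsupp.single ![a, iv k.succ, jv k, b] (1:K))
        = (Finsupp.single ![iv k.castSucc, jv k, b] (1:K)
            - Finsupp.single ![a, iv k.castSucc, jv k] (1:K)
            - Finsupp.single ![iv k.succ, jv k, b] (1:K)
            + Finsupp.single ![a, iv k.succ, jv k] (1:K))
          + (Finsupp.single ![a, iv k.castSucc, b] (1:K)
            - Finsupp.single ![a, iv k.succ, b] (1:K)) := by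
    intro k
    rw [map_sub, bdryFull_single3, bdryFull_single3]
    abel
  have key : bdryFull K V 2 (∑ k : Fin (m+1),
        (Finsupp.single ![a, iv k.castSucc, jv k, b] (1:K)
          - Finsupp.single ![a, iv k.succ, jv k, b] (1:K)))
      = (∑ k : Fin (m+1), (Finsupp.single ![iv k.castSucc, jv k, b] (1:K)
            - Finsupp.single ![a, iv k.castSucc, jv k] (1:K)
            - Finsupp.single ![iv k.succ, jv k, b] (1:K)
            + Finsupp.single ![a, iv k.succ, jv k] (1:K)))
        + (Finsupp.single ![a, iv 0, b] (1:K)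
            - Finsupp.single ![a, iv (Fin.last (m+1)), b] (1:K)) := by
    rw [map_sum, Finset.sum_congr rfl (fun k _ => hterm k), Finset.sum_add_distrib, htel]
  constructor
  · show _ ∈ allowedMod K V G 3 ⊓ (allowedMod K V G 2).comap (bdry K V 2)
    refine Submodule.mem_inf.mpr ⟨?_, ?_⟩
    · exact Submodule.sum_mem _ fun k _ =>
        sub_mem (allowed_single_mem K G (hA1 k)) (allowed_single_mem K G (hA2 k))
    · refine Submodule.mem_comap.mpr ?_
      rw [show ∀ x, bdry K V 2 x = regProj K V 2 (bdryFull K V 2 x) from fun _ => rfl,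
        key, map_add, map_sum]
      refine add_mem (Submodule.sum_mem _ fun k _ => ?_) ?_
      · rw [map_add, map_sub, map_sub]
        refine add_mem (sub_mem (sub_mem ?_ ?_) ?_) ?_
        · exact regProj_allowed_mem K G (allowed2 G (hij k) (hjb k))
        · exact regProj_allowed_mem K G (allowed2 G (hai k) (hij k))
        · exact regProj_allowed_mem K G (allowed2 G (hij' k) (hjb k))
        · exact regProj_allowed_mem K G (allowed2 G (haiAll k.succ) (hij' k))
      · rw [map_sub]
        refine sub_mem ?_ ?_
        · rcases hi0 with h | h
          · exact regProj_allowed_mem K G (allowed2 G (haiAll 0) h)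
          · rw [h, regProj_single', if_neg (irreg12 a b)]; exact zero_mem _
        · rcases him with h | h
          · exact regProj_allowed_mem K G (allowed2 G hai' h)
          · rw [h, regProj_single', if_neg (irreg12 a b)]; exact zero_mem _
  · -- the digraph map
    set fm := trapMap m a b iv jv with hfm
    have hvjpos : ∀ (l : Fin (m+2)) (h : (l:ℕ) < m+1), fm (TVert.vj l) = jv ⟨(l:ℕ), h⟩ :=
      fun l h => dif_pos h
    have hvjneg : ∀ (l : Fin (m+2)), ¬ (l:ℕ) < m+1 → fm (TVert.vj l) = b :=
      fun l h => dif_neg h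
    have hmap : ∀ ⦃u v : TVert (m+2)⦄, (Trap (m+2)).Adj u v →
        G.Adj (fm u) (fm v) ∨ fm u = fm v := by
      intro u v h
      cases u with
      | a =>
        cases v with
        | vi k => exact Or.inl (haiAll k)
        | a => exact h.elim
        | b => exact h.elim
        | vj k => exact h.elim
      | b => cases v <;> exact h.elim
      | vi k =>
        cases v with
        | vj l =>
          have h' : k = l ∨ k = finRot l := h
          by_cases hl : (l:ℕ) < m+1
          · rw [hvjpos l hl]
            left
            rcases h' with h'' | h''
            · have hk : k = (⟨(l:ℕ), hl⟩ : Fin (m+1)).castSucc := by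
                rw [h'']; ext; simp
              rw [hk]; exact hij _
            · have hk : k = (⟨(l:ℕ), hl⟩ : Fin (m+1)).succ := by
                rw [h'']; ext
                simp only [finRot, Fin.succ_mk]
                rw [Nat.mod_eq_of_lt (by omega)]
              rw [hk]; exact hij' _
          · have hl' : (l:ℕ) = m+1 := by have := l.isLt; omega
            rw [hvjneg l hl]
            rcases h' with h'' | h''
            · have hk : k = Fin.last (m+1) := by ext; rw [h'']; exact hl'
              rw [hk]; exact him
            · have hk : k = 0 := by
                ext; rw [h'']
                simp [finRot, hl']
              rw [hk]; exact hi0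
        | a => exact h.elim
        | b => exact h.elim
        | vi l => exact h.elim
      | vj k =>
        cases v with
        | b =>
          by_cases hl : (k:ℕ) < m+1
          · rw [hvjpos k hl]; exact Or.inl (hjb _)
          · rw [hvjneg k hl]; exact Or.inr rfl
        | a => exact h.elim
        | vi l => exact h.elim
        | vj l => exact h.elim
    refine ⟨⟨fm, hmap⟩, ?_⟩
    have hsingle : ∀ g : EPath (TVert (m+2)) 3,
        inducedMap K fm 3 (Finsupp.single g (1:K)) = regProj K V 3 (Finsupp.single (fm ∘ g) 1) := by
      intro g
      simp [inducedMap, Finsupp.lmapDomain_apply, Finsupp.mapDomain_single]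
    have hvjlast : fm (TVert.vj (Fin.last (m+1))) = b := hvjneg _ (by simp)
    have hvjcs : ∀ k : Fin (m+1), fm (TVert.vj k.castSucc) = jv k := by
      intro k
      rw [hvjpos k.castSucc (by simp [k.isLt])]
      congr 1
    have hrot : ∀ k : Fin (m+1), finRot (k.castSucc) = k.succ := by
      intro k
      ext
      simp only [finRot, Fin.coe_castSucc, Fin.val_succ]
      exact Nat.mod_eq_of_lt (by omega)
    rw [tau, map_sum, Fin.sum_univ_castSucc]
    have hlast : inducedMap K fm 3
        (Finsupp.single ![TVert.a, TVert.vi (Fin.last (m+1)), TVert.vj (Fin.last (m+1)), TVert.b] (1:K)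
          - Finsupp.single ![TVert.a, TVert.vi (finRot (Fin.last (m+1))), TVert.vj (Fin.last (m+1)), TVert.b] (1:K)) = 0 := by
      rw [map_sub, hsingle, hsingle, myCompMap, myCompMap]
      show regProj K V 3 (Finsupp.single ![a, _, _, b] 1)
          - regProj K V 3 (Finsupp.single ![a, _, _, b] 1) = 0
      rw [hvjlast]
      rw [regProj_single', if_neg (by
        intro hreg; exact hreg 2 rfl), regProj_single', if_neg (by
        intro hreg; exact hreg 2 rfl)]
      simp
    rw [hlast, add_zero]
    refine Finset.sum_congr rfl fun k _ => ?_
    rw [map_sub, hsingle, hsingle, myCompMap, myCompMap, hrot k]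
    show regProj K V 3 (Finsupp.single ![a, iv k.castSucc, fm (TVert.vj k.castSucc), b] 1)
        - regProj K V 3 (Finsupp.single ![a, iv k.succ, fm (TVert.vj k.castSucc), b] 1) = _
    rw [hvjcs k, regProj_allowed K G (hA1 k), regProj_allowed K G (hA2 k)]
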